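/- Symmetric Clifford twirling of single-qubit Pauli channels (Theorem 1): Let Q_U = {I,Z}⊗{I}^{⊗(n−1)} and let G_{n,Q_U} be the group of n-qubit Clifford unitaries commuting with every element of Q_U. Then averaging D over G_{n,Q_U} maps the channel E_{X⊗I^{⊗(n−1)}} (and likewise E_{Y⊗I^{⊗(n−1)}}) to the uniform mixture of E_{Q1⊗Q2} over Q1 ∈ {X,Y} and Q2 ∈ P_{n−1}, while E_{Z⊗I^{⊗(n−1)}} is left invariant. -/

import Mathlib

set_option maxHeartbeats 1000000


open Matrix

noncomputable section

/-- The single-qubit Pauli matrices `I, X, Y, Z`. -/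
def σP : Fin 4 → Matrix (Fin 2) (Fin 2) ℂ :=
  ![1, !![0, 1; 1, 0], !![0, -Complex.I; Complex.I, 0], !![1, 0; 0, -1]]

/-- The `n`-qubit Pauli operator labelled by `a : Fin n → Fin 4` (tensor product of the
`σP (a i)`), as a matrix on `(ℂ²)^{⊗n}` with index set `Fin n → Fin 2`. -/
def PauliOp {n : ℕ} (a : Fin n → Fin 4) : Matrix (Fin n → Fin 2) (Fin n → Fin 2) ℂ :=
  Matrix.of fun x y => ∏ i, σP (a i) (x i) (y i)

/-- The label of the Pauli acting as `σP q` on the first qubit and trivially elsewhere. -/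
def firstQubit (n : ℕ) (q : Fin 4) : Fin (n + 1) → Fin 4 :=
  fun i => if i = 0 then q else 0

/-- Membership in the `Q_U`-symmetric Clifford group for
`Q_U = {I, Z} ⊗ {I}^{⊗n}`: a unitary that maps Paulis to Paulis up to a fourth root
of unity phase and commutes with `Z ⊗ I^{⊗n}`. -/
def IsSymCliff (n : ℕ) (D : Matrix (Fin (n + 1) → Fin 2) (Fin (n + 1) → Fin 2) ℂ) : Prop :=
  D ∈ Matrix.unitaryGroup (Fin (n + 1) → Fin 2) ℂ
  ∧ (∀ a : Fin (n + 1) → Fin 4, ∃ c : ℂ, ∃ b : Fin (n + 1) → Fin 4,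
      c ^ 4 = 1 ∧ D * PauliOp a * Dᴴ = c • PauliOp b)
  ∧ D * PauliOp (firstQubit n 3) = PauliOp (firstQubit n 3) * D

-- (base assumed prepended; for now re-include)

def pmul : Fin 4 → Fin 4 → Fin 4 :=
  ![![0,1,2,3], ![1,0,3,2], ![2,3,0,1], ![3,2,1,0]]

def pph (a b : Fin 4) : ℂ :=
  if a = 0 ∨ b = 0 ∨ a = b then 1
  else if (a = 1 ∧ b = 2) ∨ (a = 2 ∧ b = 3) ∨ (a = 3 ∧ b = 1) then Complex.I else -Complex.I

lemma sigma_one : σP 0 = 1 := by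
  ext i j; fin_cases i <;> fin_cases j <;> simp [σP, Matrix.one_apply]

lemma sigma_mul (a b : Fin 4) : σP a * σP b = pph a b • σP (pmul a b) := by
  fin_cases a <;> fin_cases b <;>
    · simp only [σP, pmul, pph]
      norm_num [Matrix.mul_fin_two, Matrix.one_fin_two, Matrix.smul_of, Fin.ext_iff]
      all_goals (ext i j <;> fin_cases i <;> fin_cases j <;>
          simp [Complex.ext_iff] <;> ring_nf <;> simp [Complex.I_sq] <;> ring_nf)

lemma sigma_herm (a : Fin 4) : (σP a)ᴴ = σP a := by
  fin_cases a <;>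
    · ext i j
      fin_cases i <;> fin_cases j <;> simp [σP, Matrix.conjTranspose_apply, Matrix.one_apply]

lemma pph_zero_right (a : Fin 4) : pph a 0 = 1 := by simp [pph]
lemma pph_zero_left (a : Fin 4) : pph 0 a = 1 := by simp [pph]
lemma pph_self (a : Fin 4) : pph a a = 1 := by simp [pph]
lemma pph_pow_four (a b : Fin 4) : (pph a b) ^ 4 = 1 := by
  unfold pph; split_ifs <;> ring_nf <;> simp [Complex.I_sq] <;> ring_nf
lemma pph_ne_zero (a b : Fin 4) : pph a b ≠ 0 := by
  intro h
  have := pph_pow_four a b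
  rw [h] at this; simp at this
lemma pph_symm_cases (a b : Fin 4) : pph a b = pph b a ∨ pph a b = -pph b a := by
  fin_cases a <;> fin_cases b <;> simp [pph]
lemma pmul_comm' (a b : Fin 4) : pmul a b = pmul b a := by fin_cases a <;> fin_cases b <;> rfl
lemma pmul_self (a : Fin 4) : pmul a a = 0 := by fin_cases a <;> rfl
lemma pmul_zero_right (a : Fin 4) : pmul a 0 = a := by fin_cases a <;> rfl
lemma pmul_eq_zero_iff (a b : Fin 4) : pmul a b = 0 ↔ a = b := by
  fin_cases a <;> fin_cases b <;> simp [pmul] <;> decide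
lemma pph_anticomm_iff (b : Fin 4) : pph b 3 = -pph 3 b ↔ (b = 1 ∨ b = 2) := by
  fin_cases b <;> simp [pph] <;> intro h <;>
    · have := congrArg Complex.re h; norm_num at this

lemma sigma_trace (a : Fin 4) : Matrix.trace (σP a) = if a = 0 then 2 else 0 := by
  fin_cases a <;> simp [σP, Matrix.trace, Matrix.diag, Fin.sum_univ_two] <;> norm_num

lemma PauliOp_mul {n : ℕ} (a b : Fin n → Fin 4) :
    PauliOp a * PauliOp b
      = (∏ i, pph (a i) (b i)) • PauliOp (fun i => pmul (a i) (b i)) := by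
  ext x y
  rw [Matrix.mul_apply]
  have h1 : ∀ z : Fin n → Fin 2, PauliOp a x z * PauliOp b z y
      = ∏ i, (σP (a i) (x i) (z i) * σP (b i) (z i) (y i)) := by
    intro z; simp [PauliOp, Finset.prod_mul_distrib]
  simp_rw [h1]
  have h2 : (∏ i, ∑ k : Fin 2, σP (a i) (x i) k * σP (b i) k (y i))
      = ∑ z : Fin n → Fin 2, ∏ i, σP (a i) (x i) (z i) * σP (b i) (z i) (y i) := by
    rw [Finset.prod_univ_sum]
    rw [Fintype.piFinset_univ]
  rw [← h2]
  have h3 : ∀ i, (∑ k : Fin 2, σP (a i) (x i) k * σP (b i) k (y i))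
      = pph (a i) (b i) * σP (pmul (a i) (b i)) (x i) (y i) := by
    intro i
    have := congrFun (congrFun (sigma_mul (a i) (b i)) (x i)) (y i)
    simpa [Matrix.mul_apply, Matrix.smul_apply, smul_eq_mul] using this
  simp_rw [h3]
  rw [Finset.prod_mul_distrib]
  simp [PauliOp]

lemma PauliOp_herm {n : ℕ} (a : Fin n → Fin 4) : (PauliOp a)ᴴ = PauliOp a := by
  ext x y
  simp only [Matrix.conjTranspose_apply, PauliOp, Matrix.of_apply]
  rw [star_prod]
  apply Finset.prod_congr rfl
  intro i _
  have := congrFun (congrFun (sigma_herm (a i)) (x i)) (y i)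
  simpa [Matrix.conjTranspose_apply] using this

lemma PauliOp_zero {n : ℕ} : PauliOp (0 : Fin n → Fin 4) = 1 := by
  ext x y
  by_cases h : x = y
  · subst h
    simp [PauliOp, Matrix.one_apply, sigma_one, Matrix.one_apply_eq]
  · obtain ⟨i, hi⟩ := Function.ne_iff.mp h
    rw [PauliOp, Matrix.of_apply, Matrix.one_apply_ne h]
    apply Finset.prod_eq_zero (Finset.mem_univ i)
    show σP 0 (x i) (y i) = 0
    rw [sigma_one, Matrix.one_apply_ne hi]

lemma PauliOp_sq {n : ℕ} (a : Fin n → Fin 4) : PauliOp a * PauliOp a = 1 := by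
  rw [PauliOp_mul]
  have h1 : (fun i => pmul (a i) (a i)) = (0 : Fin n → Fin 4) := funext fun i => pmul_self _
  rw [h1, PauliOp_zero]
  simp [pph_self]

lemma trace_PauliOp {n : ℕ} (a : Fin n → Fin 4) :
    Matrix.trace (PauliOp a) = if a = 0 then (2 : ℂ) ^ n else 0 := by
  have h0 : (∏ i, Matrix.trace (σP (a i))) = Matrix.trace (PauliOp a) := by
    simp only [Matrix.trace, Matrix.diag, PauliOp, Matrix.of_apply]
    rw [Finset.prod_univ_sum, Fintype.piFinset_univ]
  rw [← h0]
  by_cases h : a = 0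
  · subst h
    simp [sigma_trace]
  · obtain ⟨i, hi⟩ := Function.ne_iff.mp h
    rw [if_neg h]
    apply Finset.prod_eq_zero (Finset.mem_univ i)
    rw [Pi.zero_apply] at hi
    rw [sigma_trace, if_neg hi]

lemma trace_PauliOp_mul {n : ℕ} (a b : Fin n → Fin 4) :
    Matrix.trace (PauliOp a * PauliOp b) = if a = b then (2 : ℂ) ^ n else 0 := by
  rw [PauliOp_mul, Matrix.trace_smul, trace_PauliOp, smul_eq_mul]
  by_cases h : a = b
  · subst h
    have h1 : (fun i => pmul (a i) (a i)) = (0 : Fin n → Fin 4) := funext fun i => pmul_self _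
    simp [h1, pph_self]
  · have h1 : (fun i => pmul (a i) (b i)) ≠ (0 : Fin n → Fin 4) := by
      intro hc
      apply h
      funext i
      exact (pmul_eq_zero_iff (a i) (b i)).1 (congrFun hc i)
    simp [h1, h]

lemma PauliOp_ne_zero {n : ℕ} (a : Fin n → Fin 4) : PauliOp a ≠ 0 := by
  intro h
  have := trace_PauliOp_mul a a
  rw [h, zero_mul, Matrix.trace_zero, if_pos rfl] at this
  exact (pow_ne_zero n two_ne_zero) this.symm

lemma label_eq_of_smul {n : ℕ} {a b : Fin n → Fin 4} {c : ℂ}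
    (h : PauliOp a = c • PauliOp b) : a = b := by
  by_contra hne
  have h1 := trace_PauliOp_mul a b
  rw [if_neg hne, h, Matrix.smul_mul, Matrix.trace_smul, trace_PauliOp_mul, if_pos rfl,
    smul_eq_mul] at h1
  have hc : c = 0 := by
    rcases mul_eq_zero.mp h1 with h | h
    · exact h
    · exact absurd h (pow_ne_zero n two_ne_zero)
  rw [hc, zero_smul] at h
  exact PauliOp_ne_zero a h

lemma smul_cancel_matrix {m : Type*} {M : Matrix m m ℂ} (hM : M ≠ 0) {c c' : ℂ}
    (h : c • M = c' • M) : c = c' := by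
  by_contra hne
  have h2 : (c - c') • M = 0 := by rw [sub_smul, h, sub_self]
  rcases smul_eq_zero.mp h2 with h3 | h3
  · exact hne (sub_eq_zero.mp h3)
  · exact hM h3

lemma prod_pph_cases {n : ℕ} (a b : Fin n → Fin 4) :
    (∏ i, pph (a i) (b i)) = (∏ i, pph (b i) (a i))
      ∨ (∏ i, pph (a i) (b i)) = -(∏ i, pph (b i) (a i)) := by
  have : ∀ s : Finset (Fin n), (∏ i ∈ s, pph (a i) (b i)) = (∏ i ∈ s, pph (b i) (a i))
      ∨ (∏ i ∈ s, pph (a i) (b i)) = -(∏ i ∈ s, pph (b i) (a i)) := by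
    intro s
    induction s using Finset.cons_induction with
    | empty => left; simp
    | cons i s hi ih =>
      rw [Finset.prod_cons, Finset.prod_cons]
      rcases pph_symm_cases (a i) (b i) with h | h <;> rcases ih with h2 | h2 <;>
        rw [h, h2]
      · left; rfl
      · right; ring
      · right; ring
      · left; ring
  exact this Finset.univ

lemma PauliOp_comm_or_anticomm {n : ℕ} (a b : Fin n → Fin 4) :
    PauliOp a * PauliOp b = PauliOp b * PauliOp a
      ∨ PauliOp a * PauliOp b = -(PauliOp b * PauliOp a) := by
  rw [PauliOp_mul a b, PauliOp_mul b a]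
  have hl : (fun i => pmul (b i) (a i)) = fun i => pmul (a i) (b i) :=
    funext fun i => pmul_comm' _ _
  rw [hl]
  rcases prod_pph_cases a b with h | h
  · left; rw [h]
  · right; rw [h, neg_smul]

lemma mul_fq {n : ℕ} (b : Fin (n+1) → Fin 4) (q : Fin 4) :
    PauliOp b * PauliOp (firstQubit n q)
      = pph (b 0) q • PauliOp (fun i => pmul (b i) (firstQubit n q i)) := by
  rw [PauliOp_mul]
  congr 1
  rw [Fin.prod_univ_succ]
  have h1 : ∀ i : Fin n, firstQubit n q i.succ = 0 := by
    intro i; simp [firstQubit, Fin.succ_ne_zero]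
  simp only [h1, pph_zero_right, Finset.prod_const_one, mul_one]
  simp [firstQubit]

lemma fq_mul {n : ℕ} (b : Fin (n+1) → Fin 4) (q : Fin 4) :
    PauliOp (firstQubit n q) * PauliOp b
      = pph q (b 0) • PauliOp (fun i => pmul (b i) (firstQubit n q i)) := by
  rw [PauliOp_mul]
  have hl : (fun i => pmul (firstQubit n q i) (b i)) = fun i => pmul (b i) (firstQubit n q i) :=
    funext fun i => pmul_comm' _ _
  rw [hl]
  congr 1
  rw [Fin.prod_univ_succ]
  have h1 : ∀ i : Fin n, firstQubit n q i.succ = 0 := by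
    intro i; simp [firstQubit, Fin.succ_ne_zero]
  simp only [h1, pph_zero_left, Finset.prod_const_one, mul_one]
  simp [firstQubit]

lemma anticomm_Z_of_mem {n : ℕ} {b : Fin (n+1) → Fin 4} (hb : b 0 = 1 ∨ b 0 = 2) :
    PauliOp b * PauliOp (firstQubit n 3) = -(PauliOp (firstQubit n 3) * PauliOp b) := by
  rw [mul_fq, fq_mul, ← neg_smul, (pph_anticomm_iff (b 0)).2 hb]

lemma mem_of_anticomm_Z {n : ℕ} {b : Fin (n+1) → Fin 4}
    (h : PauliOp b * PauliOp (firstQubit n 3) = -(PauliOp (firstQubit n 3) * PauliOp b)) :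
    b 0 = 1 ∨ b 0 = 2 := by
  rw [mul_fq, fq_mul, ← neg_smul] at h
  exact (pph_anticomm_iff (b 0)).1 (smul_cancel_matrix (PauliOp_ne_zero _) h)

section CliffBasic
variable {n : ℕ} {D E : Matrix (Fin (n + 1) → Fin 2) (Fin (n + 1) → Fin 2) ℂ}

lemma unit_left (h : D ∈ Matrix.unitaryGroup (Fin (n + 1) → Fin 2) ℂ) : Dᴴ * D = 1 := by
  rw [← Matrix.star_eq_conjTranspose]
  exact Matrix.mem_unitaryGroup_iff'.mp h

lemma unit_right (h : D ∈ Matrix.unitaryGroup (Fin (n + 1) → Fin 2) ℂ) : D * Dᴴ = 1 := by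
  rw [← Matrix.star_eq_conjTranspose]
  exact Matrix.mem_unitaryGroup_iff.mp h

lemma symcliff_one : IsSymCliff n 1 := by
  refine ⟨one_mem _, fun a => ⟨1, a, one_pow 4, ?_⟩, by rw [one_mul, mul_one]⟩
  rw [one_mul, conjTranspose_one, mul_one, one_smul]

lemma symcliff_mul (hD : IsSymCliff n D) (hE : IsSymCliff n E) : IsSymCliff n (D * E) := by
  obtain ⟨hDu, hDp, hDz⟩ := hD
  obtain ⟨hEu, hEp, hEz⟩ := hE
  refine ⟨mul_mem hDu hEu, fun a => ?_, ?_⟩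
  · obtain ⟨c1, b1, hc1, hb1⟩ := hEp a
    obtain ⟨c2, b2, hc2, hb2⟩ := hDp b1
    refine ⟨c2 * c1, b2, by rw [mul_pow, hc1, hc2, mul_one], ?_⟩
    rw [conjTranspose_mul]
    calc D * E * PauliOp a * (Eᴴ * Dᴴ) = D * (E * PauliOp a * Eᴴ) * Dᴴ := by
          simp only [Matrix.mul_assoc]
      _ = D * (c1 • PauliOp b1) * Dᴴ := by rw [hb1]
      _ = c1 • (D * PauliOp b1 * Dᴴ) := by
          rw [Matrix.mul_smul, Matrix.smul_mul]
      _ = c1 • (c2 • PauliOp b2) := by rw [hb2]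
      _ = (c2 * c1) • PauliOp b2 := by rw [smul_smul, mul_comm]
  · calc D * E * PauliOp (firstQubit n 3)
        = D * (PauliOp (firstQubit n 3) * E) := by rw [Matrix.mul_assoc, hEz]
      _ = PauliOp (firstQubit n 3) * (D * E) := by
          rw [← Matrix.mul_assoc, hDz, Matrix.mul_assoc]

lemma symcliff_conjT (hD : IsSymCliff n D) : IsSymCliff n Dᴴ := by
  obtain ⟨hDu, hDp, hDz⟩ := hD
  have hDul : Dᴴ * D = 1 := unit_left hDu
  have hDur : D * Dᴴ = 1 := unit_right hDu
  have hmem : Dᴴ ∈ Matrix.unitaryGroup (Fin (n + 1) → Fin 2) ℂ := by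
    rw [Matrix.mem_unitaryGroup_iff', Matrix.star_eq_conjTranspose, conjTranspose_conjTranspose]
    exact hDur
  refine ⟨hmem, ?_, ?_⟩
  · -- invert the label map
    choose c b hc hcb using hDp
    have hcne : ∀ a, c a ≠ 0 := by
      intro a h
      have := hc a
      rw [h] at this; simp at this
    have hinv : ∀ a, Dᴴ * PauliOp (b a) * D = (c a)⁻¹ • PauliOp a := by
      intro a
      have h1 : Dᴴ * (D * PauliOp a * Dᴴ) * D = PauliOp a := by
        calc Dᴴ * (D * PauliOp a * Dᴴ) * D
            = (Dᴴ * D) * PauliOp a * (Dᴴ * D) := by simp only [Matrix.mul_assoc]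
          _ = PauliOp a := by rw [hDul, one_mul, Matrix.mul_one]
      rw [hcb a] at h1
      rw [Matrix.mul_smul, Matrix.smul_mul] at h1
      rw [← h1, smul_smul, inv_mul_cancel₀ (hcne a), one_smul]
    have hbinj : Function.Injective b := by
      intro a a' haa
      have h1 := hinv a
      have h2 := hinv a'
      rw [haa] at h1
      have h3 : (c a)⁻¹ • PauliOp a = (c a')⁻¹ • PauliOp a' := by rw [← h1, ← h2]
      have h4 : PauliOp a = ((c a) * (c a')⁻¹) • PauliOp a' := by
        have := congrArg (fun M => (c a) • M) h3
        simpa [smul_smul, mul_inv_cancel₀ (hcne a), mul_comm] using this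
      exact label_eq_of_smul h4
    have hbsurj : Function.Surjective b := Finite.surjective_of_injective hbinj
    intro a
    obtain ⟨a', ha'⟩ := hbsurj a
    refine ⟨(c a')⁻¹, a', ?_, ?_⟩
    · rw [inv_pow, hc a', inv_one]
    · rw [conjTranspose_conjTranspose, ← ha']
      exact hinv a'
  · have h1 := congrArg Matrix.conjTranspose hDz
    rw [conjTranspose_mul, conjTranspose_mul, PauliOp_herm] at h1
    exact h1.symm

lemma symcliff_commZ (hD : IsSymCliff n D) :
    Dᴴ * PauliOp (firstQubit n 3) = PauliOp (firstQubit n 3) * Dᴴ :=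
  (symcliff_conjT hD).2.2

lemma scalar_of_unitary {A : Matrix (Fin (n + 1) → Fin 2) (Fin (n + 1) → Fin 2) ℂ}
    (hA : A ∈ Matrix.unitaryGroup (Fin (n + 1) → Fin 2) ℂ)
    (hD : D ∈ Matrix.unitaryGroup (Fin (n + 1) → Fin 2) ℂ) {γ : ℂ} (h : A = γ • D) :
    (starRingEnd ℂ) γ * γ = 1 := by
  have h1 : Aᴴ * A = 1 := unit_left hA
  rw [h, Matrix.conjTranspose_smul, Matrix.smul_mul, Matrix.mul_smul, unit_left hD,
    smul_smul] at h1
  have h2 := congrFun (congrFun h1 (fun _ => 0)) (fun _ => 0)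
  simpa [Matrix.smul_apply, Matrix.one_apply] using h2

end CliffBasic

section Conj
variable {n : ℕ} {D : Matrix (Fin (n + 1) → Fin 2) (Fin (n + 1) → Fin 2) ℂ}

lemma conj_pauli_pm (hD : IsSymCliff n D) (a : Fin (n + 1) → Fin 4) :
    ∃ b, Dᴴ * PauliOp a * D = PauliOp b ∨ Dᴴ * PauliOp a * D = -PauliOp b := by
  obtain ⟨hU', hP', _⟩ := symcliff_conjT hD
  obtain ⟨c, b, hc4, hcb⟩ := hP' a
  rw [conjTranspose_conjTranspose] at hcb
  have hherm : (Dᴴ * PauliOp a * D)ᴴ = Dᴴ * PauliOp a * D := by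
    simp only [conjTranspose_mul, conjTranspose_conjTranspose, PauliOp_herm, Matrix.mul_assoc]
  have hcc : (starRingEnd ℂ) c = c := by
    have h2 : (starRingEnd ℂ) c • PauliOp b = c • PauliOp b := by
      calc (starRingEnd ℂ) c • PauliOp b = (c • PauliOp b)ᴴ := by
            rw [Matrix.conjTranspose_smul, PauliOp_herm]; rfl
        _ = (Dᴴ * PauliOp a * D)ᴴ := by rw [hcb]
        _ = Dᴴ * PauliOp a * D := hherm
        _ = c • PauliOp b := hcb
    exact smul_cancel_matrix (PauliOp_ne_zero b) h2
  have hre : (c.re : ℂ) = c := Complex.conj_eq_iff_re.mp hcc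
  have hr4 : c.re ^ 4 = 1 := by
    have h3 : (c.re : ℂ) ^ 4 = 1 := by rw [hre]; exact hc4
    exact_mod_cast h3
  have hpm : c.re = 1 ∨ c.re = -1 := by
    have h5 : (c.re - 1) * (c.re + 1) * (c.re ^ 2 + 1) = 0 := by linear_combination hr4
    have h6 : c.re ^ 2 + 1 ≠ 0 := by positivity
    rcases mul_eq_zero.mp h5 with h7 | h7
    · rcases mul_eq_zero.mp h7 with h8 | h8
      · left; linarith
      · right; linarith
    · exact absurd h7 h6
  refine ⟨b, ?_⟩
  rcases hpm with h | h
  · left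
    rw [hcb, ← hre, h]
    norm_num
  · right
    rw [hcb, ← hre, h]
    norm_num

lemma conj_fq (hD : IsSymCliff n D) {q : Fin 4} (hq : q = 1 ∨ q = 2) :
    ∃ b, (b 0 = 1 ∨ b 0 = 2) ∧
      (Dᴴ * PauliOp (firstQubit n q) * D = PauliOp b
        ∨ Dᴴ * PauliOp (firstQubit n q) * D = -PauliOp b) := by
  obtain ⟨b, hb⟩ := conj_pauli_pm hD (firstQubit n q)
  refine ⟨b, ?_, hb⟩
  -- anticommutation of M := Dᴴ P_q D with Z
  set Z := PauliOp (firstQubit n 3) with hZdef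
  have hfq0 : (firstQubit n q) 0 = q := by simp [firstQubit]
  have hPZ : PauliOp (firstQubit n q) * Z = -(Z * PauliOp (firstQubit n q)) :=
    anticomm_Z_of_mem (by rw [hfq0]; exact hq)
  have hDz : D * Z = Z * D := hD.2.2
  have hDz' : Dᴴ * Z = Z * Dᴴ := symcliff_commZ hD
  have hMZ : (Dᴴ * PauliOp (firstQubit n q) * D) * Z
      = -(Z * (Dᴴ * PauliOp (firstQubit n q) * D)) := by
    calc (Dᴴ * PauliOp (firstQubit n q) * D) * Z
        = Dᴴ * (PauliOp (firstQubit n q) * (D * Z)) := by simp only [Matrix.mul_assoc]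
      _ = Dᴴ * (PauliOp (firstQubit n q) * Z * D) := by rw [hDz, Matrix.mul_assoc]
      _ = Dᴴ * (-(Z * PauliOp (firstQubit n q)) * D) := by rw [hPZ]
      _ = -(Dᴴ * Z * (PauliOp (firstQubit n q) * D)) := by
          simp only [Matrix.neg_mul, Matrix.mul_neg, Matrix.mul_assoc]
      _ = -(Z * (Dᴴ * PauliOp (firstQubit n q) * D)) := by
          rw [hDz']; simp only [Matrix.mul_assoc]
  rcases hb with h | h
  · rw [h] at hMZ
    exact mem_of_anticomm_Z hMZ
  · rw [h] at hMZ
    apply mem_of_anticomm_Z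
    simp only [Matrix.neg_mul, Matrix.mul_neg, neg_inj] at hMZ ⊢
    exact hMZ

end Conj

section Rot
variable {n : ℕ}

lemma prod_pph_pow4 {m : ℕ} (x y : Fin m → Fin 4) : (∏ i, pph (x i) (y i)) ^ 4 = 1 := by
  rw [← Finset.prod_pow]
  simp [pph_pow_four]

lemma comm_sign_mul {m : Type*} [Fintype m] {A B P : Matrix m m ℂ}
    (h1 : A * P = P * A ∨ A * P = -(P * A)) (h2 : B * P = P * B ∨ B * P = -(P * B)) :
    (B * A) * P = P * (B * A) ∨ (B * A) * P = -(P * (B * A)) := by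
  rcases h1 with h1 | h1 <;> rcases h2 with h2 | h2
  · left
    calc B * A * P = B * (A * P) := by rw [Matrix.mul_assoc]
      _ = (B * P) * A := by rw [h1, Matrix.mul_assoc]
      _ = P * (B * A) := by rw [h2, Matrix.mul_assoc]
  · right
    calc B * A * P = B * (A * P) := by rw [Matrix.mul_assoc]
      _ = (B * P) * A := by rw [h1, Matrix.mul_assoc]
      _ = -(P * (B * A)) := by rw [h2]; simp only [Matrix.neg_mul, Matrix.mul_assoc]
  · right
    calc B * A * P = B * (A * P) := by rw [Matrix.mul_assoc]
      _ = -((B * P) * A) := by rw [h1]; simp only [Matrix.mul_neg, Matrix.mul_assoc]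
      _ = -(P * (B * A)) := by rw [h2]; simp only [Matrix.neg_mul, Matrix.mul_assoc]
  · left
    calc B * A * P = B * (A * P) := by rw [Matrix.mul_assoc]
      _ = -((B * P) * A) := by rw [h1]; simp only [Matrix.mul_neg, Matrix.mul_assoc]
      _ = P * (B * A) := by rw [h2]; simp only [Matrix.neg_mul, Matrix.mul_assoc, neg_neg]

lemma rotW {b b' : Fin (n + 1) → Fin 4} (hb : b 0 = 1 ∨ b 0 = 2) (hb' : b' 0 = 1 ∨ b' 0 = 2)
    (hanti : PauliOp b * PauliOp b' = -(PauliOp b' * PauliOp b)) :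
    ∃ W, IsSymCliff n W ∧ W * PauliOp b * Wᴴ = PauliOp b' := by
  set A := PauliOp b with hAdef
  set B := PauliOp b' with hBdef
  set K := B * A with hKdef
  set c : ℂ := ((Real.sqrt 2 : ℝ) : ℂ)⁻¹ with hcdef
  have hA2 : A * A = 1 := PauliOp_sq b
  have hB2 : B * B = 1 := PauliOp_sq b'
  have hKK : K * K = -1 := by
    calc (B * A) * (B * A) = B * (A * B) * A := by simp only [Matrix.mul_assoc]
      _ = B * (-(B * A)) * A := by rw [hanti]
      _ = -(B * B * (A * A)) := by simp only [Matrix.mul_neg, Matrix.neg_mul, Matrix.mul_assoc]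
      _ = -1 := by rw [hA2, hB2, Matrix.mul_one]
  have hKH : Kᴴ = -K := by
    rw [hKdef, conjTranspose_mul, hAdef, hBdef, PauliOp_herm, PauliOp_herm, hanti]
  have hcc : star c = c := by
    rw [hcdef, star_inv₀]
    congr 1
    exact Complex.conj_ofReal _
  have hc2 : c * c = (2 : ℂ)⁻¹ := by
    rw [hcdef, ← mul_inv]
    congr 1
    rw [← Complex.ofReal_mul, Real.mul_self_sqrt (by norm_num)]
    norm_num
  set W := c • ((1 : Matrix (Fin (n+1) → Fin 2) (Fin (n+1) → Fin 2) ℂ) + K) with hWdef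
  have hWH : Wᴴ = c • (1 - K) := by
    rw [hWdef, Matrix.conjTranspose_smul, conjTranspose_add, conjTranspose_one, hKH, hcc,
      ← sub_eq_add_neg]
  have half2 : (2 : ℂ)⁻¹ • ((1 : Matrix (Fin (n+1) → Fin 2) (Fin (n+1) → Fin 2) ℂ) + 1) = 1 := by
    rw [smul_add, ← add_smul]
    norm_num
  have hWHW : Wᴴ * W = 1 := by
    rw [hWH, hWdef]
    simp only [Matrix.smul_mul, Matrix.mul_smul, smul_smul]
    rw [hc2]
    have hexp : (1 - K) * (1 + K)
        = (1 : Matrix (Fin (n+1) → Fin 2) (Fin (n+1) → Fin 2) ℂ) - K * K := by noncomm_ring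
    rw [hexp, hKK, sub_neg_eq_add, half2]
  have hWWH : W * Wᴴ = 1 := by
    rw [hWH, hWdef]
    simp only [Matrix.smul_mul, Matrix.mul_smul, smul_smul]
    rw [hc2]
    have hexp : (1 + K) * (1 - K)
        = (1 : Matrix (Fin (n+1) → Fin 2) (Fin (n+1) → Fin 2) ℂ) - K * K := by noncomm_ring
    rw [hexp, hKK, sub_neg_eq_add, half2]
  have hWu : W ∈ Matrix.unitaryGroup (Fin (n + 1) → Fin 2) ℂ := by
    rw [Matrix.mem_unitaryGroup_iff, Matrix.star_eq_conjTranspose]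
    exact hWWH
  have hconj : ∀ P : Matrix (Fin (n+1) → Fin 2) (Fin (n+1) → Fin 2) ℂ,
      W * P * Wᴴ = (2:ℂ)⁻¹ • (P - P * K + K * P - K * P * K) := by
    intro P
    rw [hWdef, hWH]
    simp only [Matrix.smul_mul, Matrix.mul_smul, smul_smul]
    rw [hc2]
    congr 1
    noncomm_ring
  have hconj_comm : ∀ P : Matrix (Fin (n+1) → Fin 2) (Fin (n+1) → Fin 2) ℂ,
      K * P = P * K → W * P * Wᴴ = P := by
    intro P hKP
    rw [hconj P]
    have h1 : K * P * K = -P := by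
      rw [hKP, Matrix.mul_assoc, hKK, Matrix.mul_neg, Matrix.mul_one]
    rw [h1, hKP]
    have h2 : P - P * K + P * K - -P = ((1:ℂ)+1) • P := by
      rw [sub_add_cancel, sub_neg_eq_add]
      rw [add_smul, one_smul]
    rw [h2, smul_smul]
    norm_num
  have hconj_anti : ∀ P : Matrix (Fin (n+1) → Fin 2) (Fin (n+1) → Fin 2) ℂ,
      K * P = -(P * K) → W * P * Wᴴ = -(P * K) := by
    intro P hKP
    rw [hconj P]
    have h1 : K * P * K = P := by
      rw [hKP, Matrix.neg_mul, Matrix.mul_assoc, hKK, Matrix.mul_neg, Matrix.mul_one, neg_neg]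
    rw [h1, hKP]
    have h2 : P - P * K + -(P * K) - P = ((1:ℂ)+1) • (-(P * K)) := by
      rw [add_smul, one_smul]
      abel
    rw [h2, smul_smul]
    norm_num
  refine ⟨W, ⟨hWu, ?_, ?_⟩, ?_⟩
  · -- Pauli property
    intro a
    have e1 : A * PauliOp a = PauliOp a * A ∨ A * PauliOp a = -(PauliOp a * A) :=
      PauliOp_comm_or_anticomm b a
    have e2 : B * PauliOp a = PauliOp a * B ∨ B * PauliOp a = -(PauliOp a * B) :=
      PauliOp_comm_or_anticomm b' a
    rcases comm_sign_mul e1 e2 with hKP | hKP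
    · exact ⟨1, a, one_pow 4, by rw [hconj_comm _ hKP, one_smul]⟩
    · -- W P Wᴴ = -(P K) = -(P_a * B * A)
      have h3 := PauliOp_mul a b'
      have h4 := PauliOp_mul (fun i => pmul (a i) (b' i)) b
      refine ⟨-((∏ i, pph (a i) (b' i)) * (∏ i, pph (pmul (a i) (b' i)) (b i))),
        (fun i => pmul (pmul (a i) (b' i)) (b i)), ?_, ?_⟩
      · rw [neg_pow, mul_pow, prod_pph_pow4, prod_pph_pow4]
        norm_num
      · rw [hconj_anti _ hKP, hKdef, ← Matrix.mul_assoc, hBdef, hAdef, h3, Matrix.smul_mul, h4,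
          smul_smul, neg_smul]
  · -- commutes with Z
    set Z := PauliOp (firstQubit n 3) with hZdef
    have hbZ : A * Z = -(Z * A) := anticomm_Z_of_mem hb
    have hb'Z : B * Z = -(Z * B) := anticomm_Z_of_mem hb'
    have hKZ : K * Z = Z * K := by
      calc (B * A) * Z = B * (A * Z) := by rw [Matrix.mul_assoc]
        _ = -((B * Z) * A) := by rw [hbZ]; simp only [Matrix.mul_neg, Matrix.mul_assoc]
        _ = Z * (B * A) := by rw [hb'Z]; simp only [Matrix.neg_mul, Matrix.mul_assoc, neg_neg]
    rw [hWdef, Matrix.smul_mul, Matrix.mul_smul]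
    congr 1
    rw [Matrix.add_mul, Matrix.mul_add, Matrix.one_mul, Matrix.mul_one, hKZ]
  · -- W A Wᴴ = B
    have h1 : K * A = B := by rw [hKdef, Matrix.mul_assoc, hA2, Matrix.mul_one]
    have h2 : A * K = -B := by
      rw [hKdef, ← Matrix.mul_assoc, hanti, Matrix.neg_mul, h1]
    have hKA : K * A = -(A * K) := by rw [h1, h2, neg_neg]
    rw [hconj_anti _ hKA, h2, neg_neg]

end Rot

lemma reach {n : ℕ} {b b' : Fin (n + 1) → Fin 4} (hb : b 0 = 1 ∨ b 0 = 2)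
    (hb' : b' 0 = 1 ∨ b' 0 = 2) :
    ∃ W, IsSymCliff n W ∧ W * PauliOp b * Wᴴ = PauliOp b' := by
  rcases PauliOp_comm_or_anticomm b b' with hcomm | hanti
  · -- commuting case: go through b'' = b * Z
    set Z := PauliOp (firstQubit n 3) with hZdef
    set b'' : Fin (n + 1) → Fin 4 := fun i => pmul (b i) (firstQubit n 3 i) with hb''def
    have hb''0 : b'' 0 = pmul (b 0) 3 := by simp [hb''def, firstQubit]
    have hb''S : b'' 0 = 1 ∨ b'' 0 = 2 := by
      rw [hb''0]
      rcases hb with h | h <;> rw [h]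
      · right; decide
      · left; decide
    have hd : PauliOp b * Z = pph (b 0) 3 • PauliOp b'' := mul_fq b 3
    have hdne := pph_ne_zero (b 0) 3
    have hbZ : PauliOp b * Z = -(Z * PauliOp b) := anticomm_Z_of_mem hb
    have hb'Z : PauliOp b' * Z = -(Z * PauliOp b') := anticomm_Z_of_mem hb'
    have hZb : Z * PauliOp b = -(PauliOp b * Z) := by rw [hbZ, neg_neg]
    have hZb' : Z * PauliOp b' = -(PauliOp b' * Z) := by rw [hb'Z, neg_neg]
    have h1 : PauliOp b * PauliOp b'' = -(PauliOp b'' * PauliOp b) := by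
      apply smul_right_injective (Matrix (Fin (n+1) → Fin 2) (Fin (n+1) → Fin 2) ℂ) hdne
      show pph (b 0) 3 • (PauliOp b * PauliOp b'') = pph (b 0) 3 • (-(PauliOp b'' * PauliOp b))
      have l1 : pph (b 0) 3 • (PauliOp b * PauliOp b'') = Z := by
        rw [← Matrix.mul_smul, ← hd, ← Matrix.mul_assoc, PauliOp_sq, Matrix.one_mul]
      have l2 : pph (b 0) 3 • (PauliOp b'' * PauliOp b) = -Z := by
        rw [← Matrix.smul_mul, ← hd, Matrix.mul_assoc, hZb, Matrix.mul_neg, ← Matrix.mul_assoc,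
          PauliOp_sq, Matrix.one_mul]
      rw [l1, smul_neg, l2, neg_neg]
    have h2 : PauliOp b'' * PauliOp b' = -(PauliOp b' * PauliOp b'') := by
      apply smul_right_injective (Matrix (Fin (n+1) → Fin 2) (Fin (n+1) → Fin 2) ℂ) hdne
      show pph (b 0) 3 • (PauliOp b'' * PauliOp b') = pph (b 0) 3 • (-(PauliOp b' * PauliOp b''))
      rw [← Matrix.smul_mul, ← hd, smul_neg, ← Matrix.mul_smul, ← hd]
      calc (PauliOp b * Z) * PauliOp b' = PauliOp b * (Z * PauliOp b') := by
            rw [Matrix.mul_assoc]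
        _ = -((PauliOp b * PauliOp b') * Z) := by
            rw [hZb']; simp only [Matrix.mul_neg, Matrix.mul_assoc]
        _ = -((PauliOp b' * PauliOp b) * Z) := by rw [hcomm]
        _ = -(PauliOp b' * (PauliOp b * Z)) := by rw [Matrix.mul_assoc]
    obtain ⟨W₁, hW₁, hW₁c⟩ := rotW hb hb''S h1
    obtain ⟨W₂, hW₂, hW₂c⟩ := rotW hb''S hb' h2
    refine ⟨W₂ * W₁, symcliff_mul hW₂ hW₁, ?_⟩
    rw [conjTranspose_mul]
    have hassoc : W₂ * W₁ * PauliOp b * (W₁ᴴ * W₂ᴴ) = W₂ * (W₁ * PauliOp b * W₁ᴴ) * W₂ᴴ := by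
      simp only [Matrix.mul_assoc]
    rw [hassoc, hW₁c, hW₂c]
  · exact rotW hb hb' hanti

section Count
open scoped Classical
variable {n : ℕ}

def repr' (G : Finset (Matrix (Fin (n + 1) → Fin 2) (Fin (n + 1) → Fin 2) ℂ))
    (M : Matrix (Fin (n + 1) → Fin 2) (Fin (n + 1) → Fin 2) ℂ) :
    Matrix (Fin (n + 1) → Fin 2) (Fin (n + 1) → Fin 2) ℂ :=
  if h : ∃ E ∈ G, ∃ c : ℂ, M = c • E then h.choose else 1

def labq (n : ℕ) (q : Fin 4) (D : Matrix (Fin (n + 1) → Fin 2) (Fin (n + 1) → Fin 2) ℂ) :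
    Fin (n + 1) → Fin 4 :=
  if h : ∃ b, Dᴴ * PauliOp (firstQubit n q) * D = PauliOp b
      ∨ Dᴴ * PauliOp (firstQubit n q) * D = -PauliOp b then h.choose else 0

lemma pm_unique {M : Matrix (Fin (n + 1) → Fin 2) (Fin (n + 1) → Fin 2) ℂ}
    {b b' : Fin (n + 1) → Fin 4} (h : M = PauliOp b ∨ M = -PauliOp b)
    (h' : M = PauliOp b' ∨ M = -PauliOp b') : b = b' := by
  have key : ∀ (x y : Fin (n + 1) → Fin 4),
      (PauliOp x = PauliOp y ∨ PauliOp x = -PauliOp y) → x = y := by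
    intro x y hxy
    rcases hxy with hxy | hxy
    · exact label_eq_of_smul (c := 1) (by rw [hxy, one_smul])
    · exact label_eq_of_smul (c := -1) (by rw [hxy, neg_one_smul])
  rcases h with h | h <;> rcases h' with h' | h'
  · exact key _ _ (Or.inl (h ▸ h'))
  · exact key _ _ (Or.inr (h ▸ h'))
  · apply key
    right
    rw [← h', h, neg_neg]
  · apply key
    left
    have := h ▸ h'
    exact neg_injective this

lemma labq_spec {D : Matrix (Fin (n + 1) → Fin 2) (Fin (n + 1) → Fin 2) ℂ}
    (hD : IsSymCliff n D) {q : Fin 4} (hq : q = 1 ∨ q = 2) :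
    (labq n q D 0 = 1 ∨ labq n q D 0 = 2)
    ∧ (Dᴴ * PauliOp (firstQubit n q) * D = PauliOp (labq n q D)
        ∨ Dᴴ * PauliOp (firstQubit n q) * D = -PauliOp (labq n q D)) := by
  obtain ⟨b, hbS, hbc⟩ := conj_fq hD hq
  have hex : ∃ b, Dᴴ * PauliOp (firstQubit n q) * D = PauliOp b
      ∨ Dᴴ * PauliOp (firstQubit n q) * D = -PauliOp b := ⟨b, hbc⟩
  have hlab : labq n q D = hex.choose := by rw [labq, dif_pos hex]
  have heq : labq n q D = b := by
    rw [hlab]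
    exact pm_unique hex.choose_spec hbc
  rw [heq]
  exact ⟨hbS, hbc⟩

lemma term_eq {D : Matrix (Fin (n + 1) → Fin 2) (Fin (n + 1) → Fin 2) ℂ} {q : Fin 4}
    {b : Fin (n + 1) → Fin 4}
    (hcond : Dᴴ * PauliOp (firstQubit n q) * D = PauliOp b
      ∨ Dᴴ * PauliOp (firstQubit n q) * D = -PauliOp b)
    (ρ : Matrix (Fin (n + 1) → Fin 2) (Fin (n + 1) → Fin 2) ℂ) :
    Dᴴ * (PauliOp (firstQubit n q) * (D * ρ * Dᴴ) * PauliOp (firstQubit n q)) * D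
      = PauliOp b * ρ * PauliOp b := by
  have hassoc : Dᴴ * (PauliOp (firstQubit n q) * (D * ρ * Dᴴ) * PauliOp (firstQubit n q)) * D
      = (Dᴴ * PauliOp (firstQubit n q) * D) * ρ * (Dᴴ * PauliOp (firstQubit n q) * D) := by
    simp only [Matrix.mul_assoc]
  rw [hassoc]
  rcases hcond with h | h <;> rw [h]
  simp only [Matrix.neg_mul, Matrix.mul_neg, neg_neg]

variable {G : Finset (Matrix (Fin (n + 1) → Fin 2) (Fin (n + 1) → Fin 2) ℂ)}

lemma repr'_eq (hsep : ∀ D ∈ G, ∀ D' ∈ G, (∃ c : ℂ, D = c • D') → D = D')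
    {M D : Matrix (Fin (n + 1) → Fin 2) (Fin (n + 1) → Fin 2) ℂ} (hD : D ∈ G) {c : ℂ}
    (hc : c ≠ 0) (hM : M = c • D) : repr' G M = D := by
  have hex : ∃ E ∈ G, ∃ c : ℂ, M = c • E := ⟨D, hD, c, hM⟩
  rw [repr', dif_pos hex]
  obtain ⟨hEG, c₀, hc₀⟩ := hex.choose_spec
  have hDE : D = (c⁻¹ * c₀) • hex.choose := by
    calc D = c⁻¹ • (c • D) := by rw [smul_smul, inv_mul_cancel₀ hc, one_smul]
      _ = c⁻¹ • M := by rw [hM]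
      _ = (c⁻¹ * c₀) • hex.choose := by rw [mul_smul, ← hc₀]
  exact (hsep D hD hex.choose hEG ⟨_, hDE⟩).symm

lemma repr'_symcliff (hG : ∀ D ∈ G, IsSymCliff n D)
    (hcover : ∀ U, IsSymCliff n U → ∃ D ∈ G, ∃ c : ℂ, U = c • D)
    {M : Matrix (Fin (n + 1) → Fin 2) (Fin (n + 1) → Fin 2) ℂ} (hM : IsSymCliff n M) :
    repr' G M ∈ G ∧ ∃ γ : ℂ, star γ * γ = 1 ∧ M = γ • repr' G M := by
  have hex : ∃ E ∈ G, ∃ c : ℂ, M = c • E := hcover M hM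
  have h1 : repr' G M = hex.choose := by rw [repr', dif_pos hex]
  obtain ⟨hEG, γ, hγ⟩ := hex.choose_spec
  rw [h1]
  refine ⟨hEG, γ, ?_, hγ⟩
  have := scalar_of_unitary hM.1 (hG _ hEG).1 hγ
  exact this

end Count

section Fiber
open scoped Classical
variable {n : ℕ} {G : Finset (Matrix (Fin (n + 1) → Fin 2) (Fin (n + 1) → Fin 2) ℂ)}

lemma step_lemma (hG : ∀ D ∈ G, IsSymCliff n D)
    (hcover : ∀ U, IsSymCliff n U → ∃ D ∈ G, ∃ c : ℂ, U = c • D)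
    {q : Fin 4} (hq : q = 1 ∨ q = 2)
    (V : Matrix (Fin (n + 1) → Fin 2) (Fin (n + 1) → Fin 2) ℂ) (hV : IsSymCliff n V)
    (x y : Fin (n + 1) → Fin 4) (hVc : V * PauliOp x * Vᴴ = PauliOp y)
    (D : Matrix (Fin (n + 1) → Fin 2) (Fin (n + 1) → Fin 2) ℂ) (hDG : D ∈ G)
    (hlab : labq n q D = x) :
    repr' G (D * Vᴴ) ∈ G ∧ labq n q (repr' G (D * Vᴴ)) = y := by
  have hDV : IsSymCliff n (D * Vᴴ) := symcliff_mul (hG D hDG) (symcliff_conjT hV)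
  obtain ⟨hEG, γ, hγu, hγ⟩ := repr'_symcliff hG hcover hDV
  set E := repr' G (D * Vᴴ) with hEdef
  have hγne : γ ≠ 0 := by
    intro h
    rw [h] at hγu
    simp at hγu
  have hE : E = γ⁻¹ • (D * Vᴴ) := by
    rw [hγ, smul_smul, inv_mul_cancel₀ hγne, one_smul]
  have hcondD := (labq_spec (hG D hDG) hq).2
  rw [hlab] at hcondD
  have hsc : star γ⁻¹ * γ⁻¹ = 1 := by
    rw [star_inv₀, ← mul_inv, hγu, inv_one]
  have hconj : Eᴴ * PauliOp (firstQubit n q) * E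
      = V * (Dᴴ * PauliOp (firstQubit n q) * D) * Vᴴ := by
    rw [hE, Matrix.conjTranspose_smul, conjTranspose_mul, conjTranspose_conjTranspose]
    have hsc2 : γ⁻¹ * star γ⁻¹ = 1 := by rw [mul_comm]; exact hsc
    simp only [Matrix.smul_mul, Matrix.mul_smul, smul_smul]
    simp only [hsc, hsc2, one_smul]
    simp only [Matrix.mul_assoc]
  have hcondE : Eᴴ * PauliOp (firstQubit n q) * E = PauliOp y
      ∨ Eᴴ * PauliOp (firstQubit n q) * E = -PauliOp y := by
    rcases hcondD with h | h
    · left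
      rw [hconj, h, hVc]
    · right
      rw [hconj, h]
      simp only [Matrix.mul_neg, Matrix.neg_mul]
      rw [← Matrix.neg_mul, ← Matrix.mul_neg]
      congr 1
      rw [← hVc]
      simp only [Matrix.neg_mul, Matrix.mul_neg]
  refine ⟨hEG, pm_unique (labq_spec (hG E hEG) hq).2 hcondE⟩

lemma fiber_card_eq (hG : ∀ D ∈ G, IsSymCliff n D)
    (hcover : ∀ U, IsSymCliff n U → ∃ D ∈ G, ∃ c : ℂ, U = c • D)
    (hsep : ∀ D ∈ G, ∀ D' ∈ G, (∃ c : ℂ, D = c • D') → D = D')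
    {q : Fin 4} (hq : q = 1 ∨ q = 2) {b b' : Fin (n + 1) → Fin 4}
    (hb : b 0 = 1 ∨ b 0 = 2) (hb' : b' 0 = 1 ∨ b' 0 = 2) :
    (G.filter (fun D => labq n q D = b)).card
      = (G.filter (fun D => labq n q D = b')).card := by
  obtain ⟨W, hW, hWc⟩ := reach hb hb'
  have hWu := hW.1
  have hWc' : Wᴴ * PauliOp b' * W = PauliOp b := by
    rw [← hWc]
    calc Wᴴ * (W * PauliOp b * Wᴴ) * W = (Wᴴ * W) * PauliOp b * (Wᴴ * W) := by
          simp only [Matrix.mul_assoc]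
      _ = PauliOp b := by rw [unit_left hWu, Matrix.one_mul, Matrix.mul_one]
  have hWc'' : Wᴴ * PauliOp b' * Wᴴᴴ = PauliOp b := by
    rw [conjTranspose_conjTranspose]; exact hWc'
  refine Finset.card_bij' (fun D _ => repr' G (D * Wᴴ)) (fun D' _ => repr' G (D' * W))
    ?_ ?_ ?_ ?_
  · intro D hD
    obtain ⟨hDG, hlab⟩ := Finset.mem_filter.mp hD
    have := step_lemma hG hcover hq W hW b b' hWc D hDG hlab
    exact Finset.mem_filter.mpr ⟨this.1, this.2⟩
  · intro D' hD'
    obtain ⟨hD'G, hlab'⟩ := Finset.mem_filter.mp hD'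
    have := step_lemma hG hcover hq Wᴴ (symcliff_conjT hW) b' b hWc'' D' hD'G hlab'
    rw [conjTranspose_conjTranspose] at this
    exact Finset.mem_filter.mpr ⟨this.1, this.2⟩
  · intro D hD
    obtain ⟨hDG, hlab⟩ := Finset.mem_filter.mp hD
    show repr' G (repr' G (D * Wᴴ) * W) = D
    have hDV : IsSymCliff n (D * Wᴴ) := symcliff_mul (hG D hDG) (symcliff_conjT hW)
    obtain ⟨hEG, γ, hγu, hγ⟩ := repr'_symcliff hG hcover hDV
    have hγne : γ ≠ 0 := by
      intro h
      rw [h] at hγu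
      simp at hγu
    have hE : repr' G (D * Wᴴ) = γ⁻¹ • (D * Wᴴ) := by
      conv_rhs => rw [hγ]
      rw [smul_smul, inv_mul_cancel₀ hγne, one_smul]
    have hEW : repr' G (D * Wᴴ) * W = γ⁻¹ • D := by
      rw [hE, Matrix.smul_mul, Matrix.mul_assoc, unit_left hWu, Matrix.mul_one]
    exact repr'_eq hsep hDG (inv_ne_zero hγne) hEW
  · intro D' hD'
    obtain ⟨hD'G, hlab'⟩ := Finset.mem_filter.mp hD'
    show repr' G (repr' G (D' * W) * Wᴴ) = D'
    have hDV : IsSymCliff n (D' * W) := symcliff_mul (hG D' hD'G) hW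
    obtain ⟨hFG, δ, hδu, hδ⟩ := repr'_symcliff hG hcover hDV
    have hδne : δ ≠ 0 := by
      intro h
      rw [h] at hδu
      simp at hδu
    have hF : repr' G (D' * W) = δ⁻¹ • (D' * W) := by
      conv_rhs => rw [hδ]
      rw [smul_smul, inv_mul_cancel₀ hδne, one_smul]
    have hFW : repr' G (D' * W) * Wᴴ = δ⁻¹ • D' := by
      rw [hF, Matrix.smul_mul, Matrix.mul_assoc, unit_right hWu, Matrix.mul_one]
    exact repr'_eq hsep hD'G (inv_ne_zero hδne) hFW

end Fiber


lemma S_card (n : ℕ) :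
    (Finset.univ.filter (fun a : Fin (n + 1) → Fin 4 => a 0 = 1 ∨ a 0 = 2)).card
      = 2 * 4 ^ n := by
  classical
  have hone : ∀ q : Fin 4,
      (Finset.univ.filter (fun a : Fin (n + 1) → Fin 4 => a 0 = q)).card = 4 ^ n := by
    intro q
    rw [← Fintype.card_subtype]
    have e : {a : Fin (n + 1) → Fin 4 // a 0 = q} ≃ (Fin n → Fin 4) :=
      { toFun := fun a i => a.1 i.succ
        invFun := fun t => ⟨Fin.cons q t, Fin.cons_zero _ _⟩
        left_inv := by
          rintro ⟨a, ha⟩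
          apply Subtype.ext
          funext i
          refine Fin.cases ?_ ?_ i
          · simp [ha]
          · intro j; simp
        right_inv := by
          intro t; funext i; simp }
    rw [Fintype.card_congr e]
    simp
  rw [Finset.filter_or, Finset.card_union_of_disjoint]
  · rw [hone, hone]; ring
  · rw [Finset.disjoint_left]
    intro a ha hb
    have h1 := (Finset.mem_filter.mp ha).2
    have h2 := (Finset.mem_filter.mp hb).2
    rw [h1] at h2
    exact absurd h2 (by decide)

theorem twirl_side (n : ℕ)
    (G : Finset (Matrix (Fin (n + 1) → Fin 2) (Fin (n + 1) → Fin 2) ℂ))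
    (hG : ∀ D ∈ G, IsSymCliff n D)
    (hcover : ∀ U, IsSymCliff n U → ∃ D ∈ G, ∃ c : ℂ, U = c • D)
    (hsep : ∀ D ∈ G, ∀ D' ∈ G, (∃ c : ℂ, D = c • D') → D = D')
    {q : Fin 4} (hq : q = 1 ∨ q = 2)
    (ρ : Matrix (Fin (n + 1) → Fin 2) (Fin (n + 1) → Fin 2) ℂ) :
    (G.card : ℂ)⁻¹ • ∑ D ∈ G,
        Dᴴ * (PauliOp (firstQubit n q) * (D * ρ * Dᴴ) * PauliOp (firstQubit n q)) * D
      = ((2 * 4 ^ n : ℂ))⁻¹ •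
          ∑ a ∈ Finset.univ.filter (fun a : Fin (n + 1) → Fin 4 => a 0 = 1 ∨ a 0 = 2),
            PauliOp a * ρ * PauliOp a := by
  classical
  set S := Finset.univ.filter (fun a : Fin (n + 1) → Fin 4 => a 0 = 1 ∨ a 0 = 2) with hSdef
  have hmaps : ∀ D ∈ G, labq n q D ∈ S := by
    intro D hD
    rw [hSdef, Finset.mem_filter]
    exact ⟨Finset.mem_univ _, (labq_spec (hG D hD) hq).1⟩
  have hsplit := Finset.sum_fiberwise_of_maps_to hmaps
    (fun D => Dᴴ * (PauliOp (firstQubit n q) * (D * ρ * Dᴴ) * PauliOp (firstQubit n q)) * D)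
  have hinner : ∀ b ∈ S,
      (∑ D ∈ G.filter (fun D => labq n q D = b),
        Dᴴ * (PauliOp (firstQubit n q) * (D * ρ * Dᴴ) * PauliOp (firstQubit n q)) * D)
      = (G.filter (fun D => labq n q D = b)).card • (PauliOp b * ρ * PauliOp b) := by
    intro b hb
    have hcongr : ∀ D ∈ G.filter (fun D => labq n q D = b),
        Dᴴ * (PauliOp (firstQubit n q) * (D * ρ * Dᴴ) * PauliOp (firstQubit n q)) * D
          = PauliOp b * ρ * PauliOp b := by
      intro D hD
      obtain ⟨hDG, hlab⟩ := Finset.mem_filter.mp hD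
      have hcond := (labq_spec (hG D hDG) hq).2
      rw [hlab] at hcond
      exact term_eq hcond ρ
    rw [Finset.sum_congr rfl hcongr, Finset.sum_const]
  have hfq0 : (firstQubit n q) 0 = q := by simp [firstQubit]
  have hfqS : (firstQubit n q) 0 = 1 ∨ (firstQubit n q) 0 = 2 := by rw [hfq0]; exact hq
  set m := (G.filter (fun D => labq n q D = firstQubit n q)).card with hmdef
  have hcards : ∀ b ∈ S, (G.filter (fun D => labq n q D = b)).card = m := by
    intro b hb
    have hbS : b 0 = 1 ∨ b 0 = 2 := by
      rw [hSdef] at hb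
      exact (Finset.mem_filter.mp hb).2
    exact fiber_card_eq hG hcover hsep hq hbS hfqS
  have htot : G.card = ∑ b ∈ S, (G.filter (fun D => labq n q D = b)).card :=
    Finset.card_eq_sum_card_fiberwise hmaps
  have hGcard : G.card = S.card * m := by
    rw [htot, Finset.sum_congr rfl hcards, Finset.sum_const, smul_eq_mul]
  have hScard : S.card = 2 * 4 ^ n := S_card n
  obtain ⟨D₀, hD₀, c₀, hc₀⟩ := hcover 1 symcliff_one
  have hGne : G.card ≠ 0 := Finset.card_ne_zero_of_mem hD₀
  have hm : m ≠ 0 := by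
    intro h
    rw [h, Nat.mul_zero] at hGcard
    exact hGne hGcard
  rw [← hsplit, Finset.sum_congr rfl hinner]
  have hconst : ∑ b ∈ S, (G.filter (fun D => labq n q D = b)).card •
      (PauliOp b * ρ * PauliOp b) = (m : ℂ) • ∑ b ∈ S, PauliOp b * ρ * PauliOp b := by
    rw [Finset.smul_sum]
    refine Finset.sum_congr rfl ?_
    intro b hb
    rw [hcards b hb, ← Nat.cast_smul_eq_nsmul ℂ]
  rw [hconst, smul_smul, hGcard, hScard]
  congr 1
  have hmC : (m : ℂ) ≠ 0 := Nat.cast_ne_zero.mpr hm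
  push_cast
  field_simp


/-- Theorem 1, symmetric Clifford twirling of single-qubit Pauli
channels: averaging `ρ ↦ D† P (D ρ D†) P D` over the `Q_U`-symmetric Clifford group
(represented by any finite set `G` of phase representatives) maps
`E_{X⊗I^{⊗n}}` and `E_{Y⊗I^{⊗n}}` to the uniform mixture of `E_{Q₁⊗Q₂}` over
`Q₁ ∈ {X,Y}` and `Q₂ ∈ P_n`, while `E_{Z⊗I^{⊗n}}` is left invariant. -/
theorem stmt16 (n : ℕ)
    (G : Finset (Matrix (Fin (n + 1) → Fin 2) (Fin (n + 1) → Fin 2) ℂ))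
    (hG : ∀ D ∈ G, IsSymCliff n D)
    (hcover : ∀ U, IsSymCliff n U → ∃ D ∈ G, ∃ c : ℂ, U = c • D)
    (hsep : ∀ D ∈ G, ∀ D' ∈ G, (∃ c : ℂ, D = c • D') → D = D') :
    (∀ ρ : Matrix (Fin (n + 1) → Fin 2) (Fin (n + 1) → Fin 2) ℂ,
      (G.card : ℂ)⁻¹ • ∑ D ∈ G,
          Dᴴ * (PauliOp (firstQubit n 1) * (D * ρ * Dᴴ) * PauliOp (firstQubit n 1)) * D
        = ((2 * 4 ^ n : ℂ))⁻¹ •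
            ∑ a ∈ Finset.univ.filter (fun a : Fin (n + 1) → Fin 4 => a 0 = 1 ∨ a 0 = 2),
              PauliOp a * ρ * PauliOp a)
    ∧ (∀ ρ : Matrix (Fin (n + 1) → Fin 2) (Fin (n + 1) → Fin 2) ℂ,
      (G.card : ℂ)⁻¹ • ∑ D ∈ G,
          Dᴴ * (PauliOp (firstQubit n 2) * (D * ρ * Dᴴ) * PauliOp (firstQubit n 2)) * D
        = ((2 * 4 ^ n : ℂ))⁻¹ •
            ∑ a ∈ Finset.univ.filter (fun a : Fin (n + 1) → Fin 4 => a 0 = 1 ∨ a 0 = 2),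
              PauliOp a * ρ * PauliOp a)
    ∧ (∀ ρ : Matrix (Fin (n + 1) → Fin 2) (Fin (n + 1) → Fin 2) ℂ,
      (G.card : ℂ)⁻¹ • ∑ D ∈ G,
          Dᴴ * (PauliOp (firstQubit n 3) * (D * ρ * Dᴴ) * PauliOp (firstQubit n 3)) * D
        = PauliOp (firstQubit n 3) * ρ * PauliOp (firstQubit n 3)) := by
  refine ⟨fun ρ => twirl_side n G hG hcover hsep (Or.inl rfl) ρ,
    fun ρ => twirl_side n G hG hcover hsep (Or.inr rfl) ρ, fun ρ => ?_⟩
  have hterm : ∀ D ∈ G,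
      Dᴴ * (PauliOp (firstQubit n 3) * (D * ρ * Dᴴ) * PauliOp (firstQubit n 3)) * D
        = PauliOp (firstQubit n 3) * ρ * PauliOp (firstQubit n 3) := by
    intro D hD
    have hDz := (hG D hD).2.2
    have hcond : Dᴴ * PauliOp (firstQubit n 3) * D = PauliOp (firstQubit n 3) := by
      rw [Matrix.mul_assoc, ← hDz, ← Matrix.mul_assoc, unit_left (hG D hD).1, Matrix.one_mul]
    exact term_eq (Or.inl hcond) ρ
  rw [Finset.sum_congr rfl hterm, Finset.sum_const]
  obtain ⟨D₀, hD₀, c₀, hc₀⟩ := hcover 1 symcliff_one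
  have hGne : G.card ≠ 0 := Finset.card_ne_zero_of_mem hD₀
  rw [← Nat.cast_smul_eq_nsmul ℂ, smul_smul,
    inv_mul_cancel₀ (Nat.cast_ne_zero.mpr hGne), one_smul]
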